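/- Let L be a field, A an associative unital L-algebra, and V a nonzero A-module which is simple and whose A-module endomorphisms consist exactly of the scalar multiplications by elements of L. Then for every field extension K of L, the base change V ⊗_L K is a simple module over the K-algebra A ⊗_L K. -/

import Mathlib

open TensorProduct

section BaseChange

variable (L : Type*) [Field L] (K : Type*) [Field K] [Algebra L K]
variable (A : Type*) [Ring A] [Algebra L A]
variable (V : Type*) [AddCommGroup V] [Module L V] [Module A V] [IsScalarTower L A V]

/-- The action of `K` on the base change `V ⊗[L] K` through the right tensor factor,
packaged as a ring homomorphism into `L`-linear endomorphisms. -/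
noncomputable def rightMulHom : K →+* Module.End L (V ⊗[L] K) where
  toFun k := LinearMap.lTensor V (LinearMap.mulLeft L k)
  map_one' := by
    show LinearMap.lTensor V (LinearMap.mulLeft L (1 : K)) = 1
    rw [LinearMap.mulLeft_one, LinearMap.lTensor_id, Module.End.one_eq_id]
  map_mul' k₁ k₂ := by
    show LinearMap.lTensor V (LinearMap.mulLeft L (k₁ * k₂)) =
      LinearMap.lTensor V (LinearMap.mulLeft L k₁) * LinearMap.lTensor V (LinearMap.mulLeft L k₂)
    rw [LinearMap.mulLeft_mul, LinearMap.lTensor_comp, Module.End.mul_eq_comp]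
  map_zero' := by
    show LinearMap.lTensor V (LinearMap.mulLeft L (0 : K)) = 0
    rw [LinearMap.mulLeft_zero_eq_zero, LinearMap.lTensor_zero]
  map_add' k₁ k₂ := by
    have h : LinearMap.mulLeft L (k₁ + k₂) =
        LinearMap.mulLeft L k₁ + LinearMap.mulLeft L k₂ := by
      ext x; simp [add_mul]
    show LinearMap.lTensor V (LinearMap.mulLeft L (k₁ + k₂)) =
      LinearMap.lTensor V (LinearMap.mulLeft L k₁) + LinearMap.lTensor V (LinearMap.mulLeft L k₂)
    rw [h, LinearMap.lTensor_add]

/-- `K` acts on the base change `V ⊗[L] K` through the right tensor factor. -/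
noncomputable instance rightModule : Module K (V ⊗[L] K) :=
  Module.compHom _ (rightMulHom L K V)

variable {L K V}

theorem rightSmul_tmul (k : K) (v : V) (c : K) :
    k • (v ⊗ₜ[L] c) = v ⊗ₜ[L] (k * c) := rfl

variable (L K V)

instance : IsScalarTower L K (V ⊗[L] K) where
  smul_assoc l k x := by
    induction x using TensorProduct.induction_on with
    | zero => simp
    | tmul v c =>
      rw [rightSmul_tmul, smul_mul_assoc, tmul_smul, rightSmul_tmul]
    | add x y hx hy => simp only [smul_add, hx, hy]

instance : SMulCommClass A K (V ⊗[L] K) where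
  smul_comm a k x := by
    induction x using TensorProduct.induction_on with
    | zero => simp
    | tmul v c =>
      rw [rightSmul_tmul, smul_tmul', smul_tmul', rightSmul_tmul]
    | add x y hx hy => simp only [smul_add, hx, hy]

/-- The base change `V ⊗[L] K` is a module over the base-changed algebra `A ⊗[L] K`. -/
noncomputable instance : Module (A ⊗[L] K) (V ⊗[L] K) :=
  TensorProduct.Algebra.module

variable {L K A V} in
private lemma aux_smul_comm (l : L) (a : A) (v : V) : l • (a • v) = a • (l • v) := by
  rw [← smul_assoc, Algebra.smul_def, Algebra.commutes, mul_smul, algebraMap_smul]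

/-- Let `L` be a field, `A` an associative unital `L`-algebra, and `V` a nonzero
`A`-module which is simple and whose `A`-module endomorphisms are exactly the scalar
multiplications by elements of `L`.  Then for every field extension `K` of `L`, the
base change `V ⊗[L] K` is a simple module over the `K`-algebra `A ⊗[L] K`. -/
theorem stmt7 (hsimple : IsSimpleModule A V)
    (hEnd : ∀ f : V →ₗ[A] V, ∃ c : L, ∀ v : V, f v = c • v) :
    IsSimpleModule (A ⊗[L] K) (V ⊗[L] K) := by
  classical
  haveI := hsimple
  haveI := hsimple.nontrivial
  set b := Module.Basis.ofVectorSpace L K with hb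
  set ι := Module.Basis.ofVectorSpaceIndex L K with hι
  set e : V ⊗[L] K ≃ₗ[L] (ι →₀ V) :=
    (TensorProduct.congr (LinearEquiv.refl L V) b.repr).trans
      (TensorProduct.finsuppScalarRight L L V ι) with he_def
  have he_tmul : ∀ (v : V) (k : K) (j : ι), e (v ⊗ₜ[L] k) j = b.repr k j • v := by
    intro v k j
    simp [he_def, TensorProduct.finsuppScalarRight_apply_tmul_apply]
  have heA : ∀ (a : A) (x : V ⊗[L] K) (j : ι), e (a • x) j = a • e x j := by
    intro a x
    induction x using TensorProduct.induction_on with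
    | zero => simp
    | tmul v k =>
      intro j
      rw [TensorProduct.smul_tmul', he_tmul, he_tmul, aux_smul_comm]
    | add x y hx hy =>
      intro j
      simp only [smul_add, map_add, Finsupp.add_apply, hx, hy]
  -- nontriviality of the base change
  obtain ⟨v, hv⟩ := exists_ne (0 : V)
  have : Nonempty ι := b.index_nonempty
  obtain ⟨i₀⟩ := this
  haveI : Nontrivial (V ⊗[L] K) := by
    refine ⟨e.symm (Finsupp.single i₀ v), 0, fun h => hv ?_⟩
    have := congrArg e h
    rw [e.apply_symm_apply, map_zero] at this
    simpa using (Finsupp.single_eq_zero.mp this)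
  haveI : Nontrivial (Submodule (A ⊗[L] K) (V ⊗[L] K)) := by
    refine ⟨⊥, ⊤, fun h => ?_⟩
    obtain ⟨x, y, hxy⟩ := exists_pair_ne (V ⊗[L] K)
    apply hxy
    have hx : x ∈ (⊥ : Submodule (A ⊗[L] K) (V ⊗[L] K)) := h ▸ Submodule.mem_top
    have hy : y ∈ (⊥ : Submodule (A ⊗[L] K) (V ⊗[L] K)) := h ▸ Submodule.mem_top
    rw [Submodule.mem_bot] at hx hy
    rw [hx, hy]
  refine (isSimpleModule_iff ..).mpr ⟨fun N => ?_⟩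
  rcases eq_or_ne N ⊥ with h | h
  · exact Or.inl h
  right
  -- closure properties of N
  have hNA : ∀ (a : A) (y : V ⊗[L] K), y ∈ N → a • y ∈ N := by
    intro a y hy
    have : a • y = (a ⊗ₜ[L] (1 : K)) • y := by
      rw [TensorProduct.Algebra.smul_def, one_smul]
    rw [this]; exact N.smul_mem _ hy
  have hNK : ∀ (k : K) (y : V ⊗[L] K), y ∈ N → k • y ∈ N := by
    intro k y hy
    have : k • y = ((1 : A) ⊗ₜ[L] k) • y := by
      rw [TensorProduct.Algebra.smul_def, one_smul]
    rw [this]; exact N.smul_mem _ hy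
  -- choose a nonzero element of N with minimal support
  obtain ⟨x₀, hx₀N, hx₀⟩ := N.ne_bot_iff.mp h
  set P : ℕ → Prop := fun n => ∃ x, x ∈ N ∧ x ≠ 0 ∧ (e x).support.card = n with hP_def
  have hP : ∃ n, P n := ⟨_, x₀, hx₀N, hx₀, rfl⟩
  obtain ⟨x, hxN, hx, hcard⟩ := Nat.find_spec hP
  have hmin : ∀ y, y ∈ N → y ≠ 0 → (e x).support.card ≤ (e y).support.card := by
    intro y hyN hy
    rw [hcard]
    exact Nat.find_min' hP ⟨y, hyN, hy, rfl⟩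
  -- the minimal element has nonempty support
  have hex : e x ≠ 0 := fun h' => hx (by simpa using congrArg e.symm h')
  obtain ⟨j₀, hj₀⟩ := Finsupp.support_nonempty_iff.mpr hex
  set v₁ := e x j₀ with hv₁_def
  have hv₁ : v₁ ≠ 0 := Finsupp.mem_support_iff.mp hj₀
  -- key step: any a annihilating v₁ annihilates all components of x
  have hker : ∀ a : A, a • v₁ = 0 → ∀ j, a • e x j = 0 := by
    intro a ha
    by_contra hne
    push_neg at hne
    obtain ⟨j, hj⟩ := hne
    have haxN : a • x ∈ N := hNA a x hxN
    have hax0 : a • x ≠ 0 := by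
      intro h'
      apply hj
      rw [← heA, h', map_zero]; rfl
    have hsub : (e (a • x)).support ⊆ (e x).support \ {j₀} := by
      intro j' hj'
      rw [Finsupp.mem_support_iff, heA] at hj'
      rw [Finset.mem_sdiff, Finset.mem_singleton, Finsupp.mem_support_iff]
      refine ⟨fun h' => hj' (by rw [h', smul_zero]), fun h' => hj' (by rw [h']; exact ha)⟩
    have hlt : (e (a • x)).support.card < (e x).support.card := by
      calc (e (a • x)).support.card ≤ ((e x).support \ {j₀}).card :=
            Finset.card_le_card hsub
        _ < (e x).support.card := by
            rw [Finset.card_sdiff_of_subset (Finset.singleton_subset_iff.mpr hj₀)]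
            exact Nat.sub_lt (Finset.card_pos.mpr ⟨j₀, hj₀⟩) one_pos
    exact absurd (hmin _ haxN hax0) (not_le.mpr hlt)
  -- build A-linear endomorphisms sending v₁ to the components of x
  set π : A →ₗ[A] V := LinearMap.toSpanSingleton A V v₁ with hπ_def
  have hπsurj : Function.Surjective π := IsSimpleModule.toSpanSingleton_surjective A hv₁
  have hkerle : ∀ j : ι, LinearMap.ker π ≤
      LinearMap.ker (LinearMap.toSpanSingleton A V (e x j)) := by
    intro j a ha
    rw [LinearMap.mem_ker] at ha ⊢
    exact hker a ha j
  set q : (A ⧸ LinearMap.ker π) ≃ₗ[A] V := π.quotKerEquivOfSurjective hπsurj with hq_def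
  have hq_mk : ∀ a : A, q (Submodule.Quotient.mk a) = a • v₁ := by
    intro a
    simp [hq_def, LinearMap.quotKerEquivOfSurjective, hπ_def,
      LinearMap.quotKerEquivRange_apply_mk]
  set f : ι → (V →ₗ[A] V) := fun j =>
    ((LinearMap.ker π).liftQ (LinearMap.toSpanSingleton A V (e x j)) (hkerle j)).comp
      (q.symm : V →ₗ[A] (A ⧸ LinearMap.ker π)) with hf_def
  have hfv₁ : ∀ j, f j v₁ = e x j := by
    intro j
    have h1 : q.symm v₁ = Submodule.Quotient.mk (1 : A) := by
      rw [LinearEquiv.symm_apply_eq, hq_mk, one_smul]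
    simp [hf_def, h1, LinearMap.toSpanSingleton]
  choose c hc using fun j => hEnd (f j)
  have hcomp : ∀ j, e x j = c j • v₁ := fun j => by rw [← hfv₁ j, hc]
  -- x is a pure tensor
  set k : K := (e x).support.sum (fun j => c j • (b j : K)) with hk_def
  have hrepr : ∀ j : ι, b.repr k j = if j ∈ (e x).support then c j else 0 := by
    intro j
    rw [hk_def, map_sum, Finsupp.finset_sum_apply]
    simp only [map_smul, Finsupp.smul_apply, Module.Basis.repr_self, Finsupp.single_apply,
      smul_eq_mul, mul_ite, mul_one, mul_zero]
    rw [Finset.sum_ite_eq']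
  have hxk : x = v₁ ⊗ₜ[L] k := by
    apply e.injective
    ext j
    rw [he_tmul, hrepr]
    by_cases hjs : j ∈ (e x).support
    · rw [if_pos hjs, ← hcomp]
    · rw [if_neg hjs, zero_smul]
      exact Finsupp.notMem_support_iff.mp hjs
  have hk0 : k ≠ 0 := by
    intro h'
    have := hrepr j₀
    rw [h', map_zero, if_pos hj₀] at this
    have h0 : c j₀ = 0 := by simpa using this.symm
    apply hv₁
    rw [hv₁_def, hcomp j₀, h0, zero_smul]
  -- v₁ ⊗ 1 ∈ N
  have hv₁N : v₁ ⊗ₜ[L] (1 : K) ∈ N := by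
    have h1 : k⁻¹ • x ∈ N := hNK _ _ hxN
    rw [hxk, rightSmul_tmul, inv_mul_cancel₀ hk0] at h1
    exact h1
  -- all pure tensors are in N
  have htmul : ∀ (w : V) (k' : K), w ⊗ₜ[L] k' ∈ N := by
    intro w k'
    obtain ⟨a, ha⟩ := hπsurj w
    have ha' : a • v₁ = w := by
      rw [← ha, hπ_def, LinearMap.toSpanSingleton_apply]
    have h1 : w ⊗ₜ[L] (1 : K) ∈ N := by
      have := hNA a _ hv₁N
      rwa [TensorProduct.smul_tmul', ha'] at this
    have := hNK k' _ h1
    rwa [rightSmul_tmul, mul_one] at this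
  have hall : ∀ z : V ⊗[L] K, z ∈ N := by
    intro z
    induction z using TensorProduct.induction_on with
    | zero => exact N.zero_mem
    | tmul v' k' => exact htmul v' k'
    | add z₁ z₂ h₁ h₂ => exact N.add_mem h₁ h₂
  rw [eq_top_iff]
  exact fun z _ => hall z

end BaseChange
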